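/- Let G = (V, E) be a directed acyclic graph with edge weights defining a linear influence instance, with thresholds i.i.d. Uniform[0,1] and objective σ(x) = E_θ[|S_n^θ|]. For an influence vector x ∈ [0,1]^V define I(x) = {v : x_v > 0} and Sat(x) = {v : x_v + Σ_{u∈δ⁻(v)} w_{uv} > 1}. If G contains no directed path with at least one edge from an element of I(x) to an element of Sat(x), and Sat(x) ∩ I(x) contains no vertex forming such a conflict (i.e., the only possible paths from I(x) to Sat(x) are trivial), then σ(x) = Σ_{v∈V} x_v · σ(1_v), where 1_v is the characteristic vector of {v}. -/

import Mathlib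

open MeasureTheory Finset
open scoped Classical

/-- The final activated set of the linear influence process on a weighted digraph
with weights `wt`, thresholds `θ` and direct influences `x`: starting from `∅`, a
vertex `v` activates once the total weight of edges from the active set into `v`
plus `x v` reaches `θ v`; the process runs for `|W|` rounds. -/
noncomputable def finalSet {W : Type*} [Fintype W] (wt : W → W → ℝ) (θ x : W → ℝ) :
    Finset W :=
  (fun S => S ∪ Finset.univ.filter (fun v => θ v ≤ (∑ u ∈ S, wt u v) + x v))^[Fintype.card W] ∅

/-- The expected size of the final activated set of the linear influence process,
the thresholds being i.i.d. `Uniform [0,1]`. -/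
noncomputable def sigmaLin {W : Type*} [Fintype W] (wt : W → W → ℝ) (x : W → ℝ) : ℝ :=
  ∫ θ : W → ℝ, ((finalSet wt θ x).card : ℝ)
    ∂(Measure.pi fun _ : W => volume.restrict (Set.Icc 0 1))

namespace LinInfAux

open scoped ENNReal

noncomputable def nuU : Measure ℝ := volume.restrict (Set.Icc 0 1)

instance : IsProbabilityMeasure nuU := by
  constructor; simp [nuU, Real.volume_Icc]


noncomputable def F {V : Type*} [Fintype V] (w : V → V → ℝ) (x θ : V → ℝ)
    (S : Finset V) : Finset V :=
  S ∪ Finset.univ.filter (fun v => θ v ≤ (∑ u ∈ S, w u v) + x v)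

variable {V : Type*} [Fintype V]

lemma finalSet_def (w : V → V → ℝ) (x θ : V → ℝ) :
    finalSet w θ x = (F w x θ)^[Fintype.card V] ∅ := rfl

lemma subset_F (w : V → V → ℝ) (x θ : V → ℝ) (S : Finset V) : S ⊆ F w x θ S :=
  Finset.subset_union_left

lemma iter_mono (w : V → V → ℝ) (x θ : V → ℝ) {k l : ℕ} (hkl : k ≤ l) :
    (F w x θ)^[k] ∅ ⊆ (F w x θ)^[l] ∅ := by
  have := monotone_nat_of_le_succ (f := fun k => (F w x θ)^[k] ∅)
    (fun k => by
      show (F w x θ)^[k] ∅ ≤ (F w x θ)^[k+1] ∅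
      rw [Function.iterate_succ_apply']
      exact subset_F _ _ _ _) hkl
  simpa using this

lemma F_fix (w : V → V → ℝ) (x θ : V → ℝ) :
    F w x θ (finalSet w θ x) = finalSet w θ x := by
  have key : ∀ k : ℕ, (F w x θ) ((F w x θ)^[k] ∅) = (F w x θ)^[k] ∅ ∨
      k ≤ ((F w x θ)^[k] ∅).card := by
    intro k
    induction k with
    | zero => right; omega
    | succ k ih =>
      rcases ih with h | h
      · left
        rw [Function.iterate_succ_apply', h]
        exact h
      · by_cases he : (F w x θ) ((F w x θ)^[k] ∅) = (F w x θ)^[k] ∅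
        · left
          rw [Function.iterate_succ_apply', he]
          exact he
        · right
          have hss : (F w x θ)^[k] ∅ ⊂ (F w x θ)^[k+1] ∅ := by
            rw [Function.iterate_succ_apply']
            exact (subset_F _ _ _ _).ssubset_of_ne (Ne.symm he)
          have := Finset.card_lt_card hss
          omega
  rw [finalSet_def]
  rcases key (Fintype.card V) with h | h
  · exact h
  · have huniv : (F w x θ)^[Fintype.card V] ∅ = Finset.univ :=
      Finset.eq_univ_of_card _ (le_antisymm (Finset.card_le_univ _) h)
    rw [huniv]
    exact Finset.Subset.antisymm (Finset.subset_univ _) (subset_F _ _ _ _)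

lemma iter_stab (w : V → V → ℝ) (x θ : V → ℝ) (j : ℕ) :
    (F w x θ)^[Fintype.card V + j] ∅ = finalSet w θ x := by
  induction j with
  | zero => exact (finalSet_def w x θ).symm
  | succ j ih =>
    rw [show Fintype.card V + (j+1) = (Fintype.card V + j) + 1 by omega,
      Function.iterate_succ_apply', ih, F_fix]

lemma iter_subset_finalSet (w : V → V → ℝ) (x θ : V → ℝ) (k : ℕ) :
    (F w x θ)^[k] ∅ ⊆ finalSet w θ x := by
  rcases le_total k (Fintype.card V) with h | h
  · rw [finalSet_def]; exact iter_mono w x θ h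
  · obtain ⟨j, rfl⟩ := Nat.exists_eq_add_of_le h
    rw [iter_stab]

lemma mem_finalSet_iff (w : V → V → ℝ) (hw0 : ∀ u v, 0 ≤ w u v) (x θ : V → ℝ) (v : V) :
    v ∈ finalSet w θ x ↔ θ v ≤ (∑ u ∈ finalSet w θ x, w u v) + x v := by
  constructor
  · have key : ∀ k, ∀ v, v ∈ (F w x θ)^[k] ∅ →
        θ v ≤ (∑ u ∈ finalSet w θ x, w u v) + x v := by
      intro k
      induction k with
      | zero => simp
      | succ k ih =>
        intro v hv
        rw [Function.iterate_succ_apply', F, Finset.mem_union] at hv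
        rcases hv with hv | hv
        · exact ih v hv
        · rw [Finset.mem_filter] at hv
          refine hv.2.trans (add_le_add_left ?_ _)
          exact Finset.sum_le_sum_of_subset_of_nonneg
            (iter_subset_finalSet w x θ k) (fun u _ _ => hw0 u v)
    intro hv
    rw [finalSet_def] at hv
    exact key _ v hv
  · intro h
    conv_lhs => rw [← F_fix w x θ]
    rw [F, Finset.mem_union, Finset.mem_filter]
    right
    exact ⟨Finset.mem_univ v, h⟩

lemma sum_mem_eq (w : V → V → ℝ) (S : Finset V) (v : V) :
    (∑ u ∈ S, w u v) = ∑ u : V, w u v * (if u ∈ S then 1 else 0) := by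
  simp only [mul_ite, mul_one, mul_zero]
  rw [Finset.sum_ite_mem, Finset.univ_inter]

lemma finalSet_congr (w : V → V → ℝ) (hw0 : ∀ u v, 0 ≤ w u v) (r : V → ℕ)
    (hdag : ∀ u v, w u v ≠ 0 → r u < r v) (x : V → ℝ) :
    ∀ (v : V) (θ θ' : V → ℝ), (∀ s, r s ≤ r v → θ s = θ' s) →
      (v ∈ finalSet w θ x ↔ v ∈ finalSet w θ' x) := by
  have key : ∀ (n : ℕ) (v : V) (θ θ' : V → ℝ), r v < n →
      (∀ s, r s ≤ r v → θ s = θ' s) → (v ∈ finalSet w θ x ↔ v ∈ finalSet w θ' x) := by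
    intro n
    induction n with
    | zero => intro v _ _ h; omega
    | succ n ih =>
      intro v θ θ' hv hagree
      rw [mem_finalSet_iff w hw0, mem_finalSet_iff w hw0]
      have hsum : (∑ u ∈ finalSet w θ x, w u v) = ∑ u ∈ finalSet w θ' x, w u v := by
        rw [sum_mem_eq, sum_mem_eq]
        refine Finset.sum_congr rfl fun u _ => ?_
        by_cases h : w u v = 0
        · simp [h]
        · have hr := hdag u v h
          rw [if_congr (ih u θ θ' (by omega) fun s hs => hagree s (by omega)) rfl rfl]
      rw [hsum, hagree v le_rfl]
  intro v θ θ' h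
  exact key (r v + 1) v θ θ' (by omega) h

lemma measurable_memFinalSet (w : V → V → ℝ) (x : V → ℝ) (v : V) :
    MeasurableSet {θ : V → ℝ | v ∈ finalSet w θ x} := by
  have key : ∀ k, ∀ v : V, MeasurableSet {θ : V → ℝ | v ∈ (F w x θ)^[k] ∅} := by
    intro k
    induction k with
    | zero => intro v; simp
    | succ k ih =>
      intro v
      have : {θ : V → ℝ | v ∈ (F w x θ)^[k+1] ∅} =
          {θ : V → ℝ | v ∈ (F w x θ)^[k] ∅} ∪
          {θ : V → ℝ | θ v ≤ (∑ u ∈ (F w x θ)^[k] ∅, w u v) + x v} := by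
        ext θ
        simp only [Function.iterate_succ_apply', F, Finset.mem_union, Set.mem_setOf_eq,
          Set.mem_union, Finset.mem_filter, Finset.mem_univ, true_and]
      rw [this]
      refine (ih v).union ?_
      apply measurableSet_le (measurable_pi_apply v)
      apply Measurable.add_const ?_ (x v)
      have : (fun θ : V → ℝ => ∑ u ∈ (F w x θ)^[k] ∅, w u v)
          = fun θ : V → ℝ => ∑ u : V, w u v * (if u ∈ (F w x θ)^[k] ∅ then 1 else 0) := by
        funext θ; exact sum_mem_eq w _ v
      rw [this]
      apply Finset.measurable_sum
      intro u _
      apply Measurable.const_mul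
      have : (fun θ : V → ℝ => (if u ∈ (F w x θ)^[k] ∅ then (1:ℝ) else 0))
          = {θ : V → ℝ | u ∈ (F w x θ)^[k] ∅}.indicator (fun _ => (1:ℝ)) := by
        funext θ; simp [Set.indicator_apply]
      rw [this]
      exact measurable_const.indicator (ih u)
  have := key (Fintype.card V) v
  simpa [finalSet_def] using this


/-- the event that `v` is eventually activated -/
def act (w : V → V → ℝ) (x : V → ℝ) (v : V) : Set (V → ℝ) := {θ | v ∈ finalSet w θ x}

lemma nuU_Iic (c : ℝ) : nuU (Set.Iic c) = ENNReal.ofReal (min c 1) := by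
  rw [nuU, Measure.restrict_apply measurableSet_Iic]
  have h : Set.Iic c ∩ Set.Icc 0 1 = Set.Icc 0 (min c 1) := by
    ext t
    simp only [Set.mem_inter_iff, Set.mem_Iic, Set.mem_Icc, le_min_iff]
    constructor
    · rintro ⟨h1, h2, h3⟩; exact ⟨h2, h1, h3⟩
    · rintro ⟨h1, h2, h3⟩; exact ⟨h2, h1, h3⟩
  rw [h, Real.volume_Icc, sub_zero]

lemma lint_ind_le (c : ℝ) (h0 : 0 ≤ c) (h1 : c ≤ 1) :
    ∫⁻ t, (if t ≤ c then 1 else 0) ∂nuU = ENNReal.ofReal c := by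
  have h : (fun t : ℝ => (if t ≤ c then (1:ℝ≥0∞) else 0))
      = (Set.Iic c).indicator (fun _ => 1) := by
    funext t; simp [Set.indicator_apply, Set.mem_Iic]
  rw [h]
  rw [show ((fun _ => 1 : ℝ → ℝ≥0∞)) = (1 : ℝ → ℝ≥0∞) from rfl]
  rw [lintegral_indicator_one measurableSet_Iic, nuU_Iic c, min_eq_left h1]

variable [DecidableEq V]

lemma mem_update_iff (w : V → V → ℝ) (hw0 : ∀ u v, 0 ≤ w u v) (r : V → ℕ)
    (hdag : ∀ u v, w u v ≠ 0 → r u < r v) (x : V → ℝ) {u v : V} (hr : r u < r v)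
    (θ : V → ℝ) (t t' : ℝ) :
    u ∈ finalSet w (Function.update θ v t) x ↔ u ∈ finalSet w (Function.update θ v t') x := by
  apply finalSet_congr w hw0 r hdag x u
  intro s hs
  have hsv : s ≠ v := fun h => by subst h; omega
  rw [Function.update_of_ne hsv, Function.update_of_ne hsv]

lemma rec1 (w : V → V → ℝ) (hw0 : ∀ u v, 0 ≤ w u v) (r : V → ℕ)
    (hdag : ∀ u v, w u v ≠ 0 → r u < r v) (x : V → ℝ) (hx0 : ∀ s, 0 ≤ x s)
    (v : V) (hsat : x v + ∑ t, w t v ≤ 1) :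
    (Measure.pi fun _ : V => nuU) (act w x v) = ENNReal.ofReal (x v)
      + ∑ u, ENNReal.ofReal (w u v) * (Measure.pi fun _ : V => nuU) (act w x u) := by
  have hAmeas : ∀ u, MeasurableSet (act w x u) := fun u => measurable_memFinalSet w x u
  set f : (V → ℝ) → ℝ≥0∞ := (act w x v).indicator 1 with hf_def
  set g : (V → ℝ) → ℝ≥0∞ := fun θ =>
    ENNReal.ofReal ((∑ u ∈ finalSet w θ x, w u v) + x v) with hg_def
  have hfm : Measurable f := measurable_one.indicator (hAmeas v)
  have hsm : Measurable fun θ : V → ℝ =>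
      (∑ u ∈ finalSet w θ x, w u v) + x v := by
    apply Measurable.add_const ?_ (x v)
    have hrw := funext fun θ : V → ℝ => sum_mem_eq w (finalSet w θ x) v
    rw [hrw]
    apply Finset.measurable_sum
    intro u _
    apply Measurable.const_mul
    exact Measurable.ite (hAmeas u) measurable_const measurable_const
  have hgm : Measurable g := ENNReal.measurable_ofReal.comp hsm
  have step1 : ∫⁻ θ, f θ ∂(Measure.pi fun _ : V => nuU)
      = ∫⁻ θ, g θ ∂(Measure.pi fun _ : V => nuU) := by
    apply lintegral_eq_of_lmarginal_eq {v} hfm hgm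
    rw [lmarginal_singleton, lmarginal_singleton]
    funext θ
    set c : ℝ := (∑ u ∈ finalSet w (Function.update θ v 0) x, w u v) + x v with hc
    have hindep : ∀ t : ℝ,
        (∑ u ∈ finalSet w (Function.update θ v t) x, w u v)
        = ∑ u ∈ finalSet w (Function.update θ v 0) x, w u v := by
      intro t
      rw [sum_mem_eq, sum_mem_eq]
      refine Finset.sum_congr rfl fun u _ => ?_
      by_cases h : w u v = 0
      · simp [h]
      · have hiff := mem_update_iff w hw0 r hdag x (hdag u v h) θ t 0
        by_cases hm : u ∈ finalSet w (Function.update θ v 0) x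
        · have hm' := hiff.mpr hm
          simp [hm, hm']
        · have hm' : u ∉ finalSet w (Function.update θ v t) x := fun hh => hm (hiff.mp hh)
          simp [hm, hm']
    have hc0 : 0 ≤ c := by
      apply add_nonneg ?_ (hx0 v)
      exact Finset.sum_nonneg fun u _ => hw0 u v
    have hc1 : c ≤ 1 := by
      rw [hc, add_comm]
      refine le_trans (add_le_add_right ?_ _) hsat
      exact Finset.sum_le_sum_of_subset_of_nonneg (Finset.subset_univ _)
        (fun u _ _ => hw0 u v)
    have hfl : ∀ t : ℝ, f (Function.update θ v t) = if t ≤ c then 1 else 0 := by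
      intro t
      rw [hf_def, Set.indicator_apply]
      have hiff : Function.update θ v t ∈ act w x v ↔ t ≤ c := by
        rw [act, Set.mem_setOf_eq, mem_finalSet_iff w hw0,
          Function.update_self, hindep t, hc]
      rw [if_congr hiff rfl rfl]
      rfl
    have hgl : ∀ t : ℝ, g (Function.update θ v t) = ENNReal.ofReal c := by
      intro t
      rw [hg_def]
      simp only
      rw [hindep t, hc]
    calc ∫⁻ t, f (Function.update θ v t) ∂nuU
        = ∫⁻ t, (if t ≤ c then 1 else 0) ∂nuU := lintegral_congr hfl
      _ = ENNReal.ofReal c := lint_ind_le c hc0 hc1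
      _ = ∫⁻ t, g (Function.update θ v t) ∂nuU := by
          rw [lintegral_congr hgl, lintegral_const, measure_univ, mul_one]
  have step2 : ∫⁻ θ, g θ ∂(Measure.pi fun _ : V => nuU)
      = ENNReal.ofReal (x v)
      + ∑ u, ENNReal.ofReal (w u v) * (Measure.pi fun _ : V => nuU) (act w x u) := by
    have hg_eq : ∀ θ, g θ =
        (∑ u, (act w x u).indicator (fun _ => ENNReal.ofReal (w u v)) θ)
        + ENNReal.ofReal (x v) := by
      intro θ
      rw [hg_def]
      simp only
      rw [sum_mem_eq w (finalSet w θ x) v]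
      rw [ENNReal.ofReal_add ?h1 (hx0 v)]
      case h1 =>
        apply Finset.sum_nonneg
        intro u _
        apply mul_nonneg (hw0 u v)
        split <;> norm_num
      congr 1
      rw [ENNReal.ofReal_sum_of_nonneg (fun u _ => by
        apply mul_nonneg (hw0 u v); split <;> norm_num)]
      refine Finset.sum_congr rfl fun u _ => ?_
      by_cases h : u ∈ finalSet w θ x
      · have h' : θ ∈ act w x u := h
        simp [h, Set.indicator_of_mem h']
      · have h' : θ ∉ act w x u := h
        simp [h, Set.indicator_of_notMem h']
    rw [lintegral_congr hg_eq]
    rw [lintegral_add_right _ measurable_const]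
    rw [lintegral_const, measure_univ, mul_one]
    rw [lintegral_finset_sum _ (fun u _ => measurable_const.indicator (hAmeas u))]
    rw [add_comm]
    congr 1
    refine Finset.sum_congr rfl fun u _ => ?_
    rw [lintegral_indicator_const (hAmeas u)]
  rw [← lintegral_indicator_one (hAmeas v), step1, step2]

lemma rec2 (w : V → V → ℝ) (hw0 : ∀ u v, 0 ≤ w u v) (r : V → ℕ)
    (hdag : ∀ u v, w u v ≠ 0 → r u < r v) (x : V → ℝ) (hx0 : ∀ s, 0 ≤ x s)
    (hx1 : ∀ s, x s ≤ 1) (v : V)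
    (hz : ∀ u, w u v ≠ 0 → (Measure.pi fun _ : V => nuU) (act w x u) = 0) :
    (Measure.pi fun _ : V => nuU) (act w x v) = ENNReal.ofReal (x v) := by
  have hAmeas : ∀ u, MeasurableSet (act w x u) := fun u => measurable_memFinalSet w x u
  set N : Set (V → ℝ) := ⋃ u ∈ {u : V | w u v ≠ 0}, act w x u with hN
  have hNmeas : MeasurableSet N :=
    MeasurableSet.biUnion (Set.to_countable _) fun u _ => hAmeas u
  have hNnull : (Measure.pi fun _ : V => nuU) N = 0 := by
    apply measure_biUnion_null_iff (Set.to_countable _) |>.mpr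
    intro u hu
    exact hz u hu
  have hNindep : ∀ (θ : V → ℝ) (t t' : ℝ),
      Function.update θ v t ∈ N → Function.update θ v t' ∈ N := by
    intro θ t t' h
    simp only [hN, Set.mem_iUnion, Set.mem_setOf_eq] at h ⊢
    obtain ⟨u, hu, hmem⟩ := h
    exact ⟨u, hu, (mem_update_iff w hw0 r hdag x (hdag u v hu) θ t t').mp hmem⟩
  set f : (V → ℝ) → ℝ≥0∞ := (act w x v \ N).indicator 1 with hf_def
  set g : (V → ℝ) → ℝ≥0∞ := Nᶜ.indicator (fun _ => ENNReal.ofReal (x v)) with hg_def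
  have hfm : Measurable f := measurable_one.indicator ((hAmeas v).diff hNmeas)
  have hgm : Measurable g := measurable_const.indicator hNmeas.compl
  have step1 : ∫⁻ θ, f θ ∂(Measure.pi fun _ : V => nuU)
      = ∫⁻ θ, g θ ∂(Measure.pi fun _ : V => nuU) := by
    apply lintegral_eq_of_lmarginal_eq {v} hfm hgm
    rw [lmarginal_singleton, lmarginal_singleton]
    funext θ
    by_cases hmem : Function.update θ v 0 ∈ N
    · have hfl : ∀ t : ℝ, f (Function.update θ v t) = 0 := by
        intro t
        rw [hf_def, Set.indicator_apply_eq_zero]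
        intro hd
        exact absurd (hNindep θ 0 t hmem) hd.2
      have hgl : ∀ t : ℝ, g (Function.update θ v t) = 0 := by
        intro t
        rw [hg_def, Set.indicator_apply_eq_zero]
        intro hd
        exact absurd (hNindep θ 0 t hmem) hd
      rw [lintegral_congr hfl, lintegral_congr hgl]
    · have hnot : ∀ (t : ℝ) u, w u v ≠ 0 → u ∉ finalSet w (Function.update θ v t) x := by
        intro t u hu hmem'
        apply hmem
        simp only [hN, Set.mem_iUnion, Set.mem_setOf_eq]
        exact ⟨u, hu, (mem_update_iff w hw0 r hdag x (hdag u v hu) θ t 0).mp hmem'⟩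
      have hfl : ∀ t : ℝ, f (Function.update θ v t) = if t ≤ x v then 1 else 0 := by
        intro t
        rw [hf_def, Set.indicator_apply]
        have hiff : Function.update θ v t ∈ act w x v \ N ↔ t ≤ x v := by
          constructor
          · rintro ⟨hmem', -⟩
            rw [act, Set.mem_setOf_eq, mem_finalSet_iff w hw0,
              Function.update_self] at hmem'
            have hzero : (∑ u ∈ finalSet w (Function.update θ v t) x, w u v) = 0 := by
              apply Finset.sum_eq_zero
              intro u hu
              by_cases h : w u v = 0
              · exact h
              · exact absurd hu (hnot t u h)
            rwa [hzero, zero_add] at hmem'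
          · intro ht
            constructor
            · rw [act, Set.mem_setOf_eq, mem_finalSet_iff w hw0,
                Function.update_self]
              have hzero : (∑ u ∈ finalSet w (Function.update θ v t) x, w u v) = 0 := by
                apply Finset.sum_eq_zero
                intro u hu
                by_cases h : w u v = 0
                · exact h
                · exact absurd hu (hnot t u h)
              rw [hzero, zero_add]
              exact ht
            · intro hd
              exact hmem (hNindep θ t 0 hd)
        rw [if_congr hiff rfl rfl]
        rfl
      have hgl : ∀ t : ℝ, g (Function.update θ v t) = ENNReal.ofReal (x v) := by
        intro t
        rw [hg_def, Set.indicator_of_mem]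
        intro hd
        exact hmem (hNindep θ t 0 hd)
      rw [lintegral_congr hfl, lintegral_congr hgl, lint_ind_le _ (hx0 v) (hx1 v),
        lintegral_const, measure_univ, mul_one]
  have hfinal : (Measure.pi fun _ : V => nuU) (act w x v)
      = (Measure.pi fun _ : V => nuU) (act w x v \ N) := (measure_diff_null hNnull).symm
  rw [hfinal, ← lintegral_indicator_one ((hAmeas v).diff hNmeas), step1, hg_def,
    lintegral_indicator_const hNmeas.compl,
    measure_compl hNmeas (measure_ne_top _ _), hNnull, measure_univ, tsub_zero, mul_one]

/-- the probability that `v` is eventually activated -/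
noncomputable def prb (w : V → V → ℝ) (x : V → ℝ) (v : V) : ℝ≥0∞ :=
  (Measure.pi fun _ : V => nuU) (act w x v)

noncomputable def prbR (w : V → V → ℝ) (x : V → ℝ) (v : V) : ℝ :=
  (prb w x v).toReal

lemma rank_lt {w : V → V → ℝ} (r : V → ℕ) (hdag : ∀ u v : V, w u v ≠ 0 → r u < r v)
    {a b : V} (hab : Relation.TransGen (fun a b : V => w a b ≠ 0) a b) : r a < r b := by
  induction hab with
  | single h => exact hdag _ _ h
  | tail _ h ih => exact lt_trans ih (hdag _ _ h)

variable [DecidableEq V]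

lemma prb_zero (w : V → V → ℝ) (hw0 : ∀ u v, 0 ≤ w u v) (hw1 : ∀ v, (∑ u, w u v) ≤ 1)
    (r : V → ℕ) (hdag : ∀ u v, w u v ≠ 0 → r u < r v) (x : V → ℝ) (hx0 : ∀ s, 0 ≤ x s)
    (v : V)
    (h : ∀ s, (s = v ∨ Relation.TransGen (fun a b : V => w a b ≠ 0) s v) → x s = 0) :
    prb w x v = 0 := by
  have key : ∀ n (v : V), r v < n →
      (∀ s, (s = v ∨ Relation.TransGen (fun a b : V => w a b ≠ 0) s v) → x s = 0) →
      prb w x v = 0 := by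
    intro n
    induction n with
    | zero => intro v hv; omega
    | succ n ih =>
      intro v hv h
      have hxv : x v = 0 := h v (Or.inl rfl)
      have hsat : x v + ∑ t, w t v ≤ 1 := by rw [hxv, zero_add]; exact hw1 v
      rw [prb, rec1 w hw0 r hdag x hx0 v hsat, hxv, ENNReal.ofReal_zero, zero_add]
      apply Finset.sum_eq_zero
      intro u _
      by_cases hwu : w u v = 0
      · rw [hwu, ENNReal.ofReal_zero, zero_mul]
      · have hru := hdag u v hwu
        have hcl : ∀ s, (s = u ∨ Relation.TransGen (fun a b : V => w a b ≠ 0) s u) →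
            x s = 0 := by
          intro s hs
          apply h s
          rcases hs with rfl | hs
          · exact Or.inr (Relation.TransGen.single hwu)
          · exact Or.inr (Relation.TransGen.tail hs hwu)
        rw [show (Measure.pi fun _ : V => nuU) (act w x u) = prb w x u from rfl,
          ih u (by omega) hcl, mul_zero]
  exact key (r v + 1) v (by omega) h

lemma prbR_rec (w : V → V → ℝ) (hw0 : ∀ u v, 0 ≤ w u v) (hw1 : ∀ v, (∑ u, w u v) ≤ 1)
    (r : V → ℕ) (hdag : ∀ u v, w u v ≠ 0 → r u < r v) (x : V → ℝ) (hx0 : ∀ s, 0 ≤ x s)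
    (hx1 : ∀ s, x s ≤ 1) (v : V)
    (hz : 1 < x v + ∑ t, w t v → ∀ u, w u v ≠ 0 → prb w x u = 0) :
    prbR w x v = x v + ∑ u, w u v * prbR w x u := by
  by_cases hsat : x v + ∑ t, w t v ≤ 1
  · have h := rec1 w hw0 r hdag x hx0 v hsat
    rw [prbR, prb, h]
    rw [ENNReal.toReal_add ENNReal.ofReal_ne_top]
    · rw [ENNReal.toReal_ofReal (hx0 v)]
      congr 1
      rw [ENNReal.toReal_sum (fun u _ =>
        ENNReal.mul_ne_top ENNReal.ofReal_ne_top (measure_ne_top _ _))]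
      refine Finset.sum_congr rfl fun u _ => ?_
      rw [ENNReal.toReal_mul, ENNReal.toReal_ofReal (hw0 u v)]
      rfl
    · exact ENNReal.sum_ne_top.mpr fun u _ =>
        ENNReal.mul_ne_top ENNReal.ofReal_ne_top (measure_ne_top _ _)
  · push_neg at hsat
    have hz' := hz hsat
    have h := rec2 w hw0 r hdag x hx0 hx1 v (fun u hu => hz' u hu)
    rw [prbR, prb, h, ENNReal.toReal_ofReal (hx0 v)]
    have hzero : ∑ u, w u v * prbR w x u = 0 := by
      apply Finset.sum_eq_zero
      intro u _
      by_cases hwu : w u v = 0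
      · rw [hwu, zero_mul]
      · rw [prbR, hz' u hwu, ENNReal.toReal_zero, mul_zero]
    rw [hzero, add_zero]

lemma sigma_eq (w : V → V → ℝ) (y : V → ℝ) :
    sigmaLin w y = ∑ v, prbR w y v := by
  have h0 : sigmaLin w y
      = ∫ θ, ((finalSet w θ y).card : ℝ) ∂(Measure.pi fun _ : V => nuU) := rfl
  rw [h0]
  have h1 : (fun θ : V → ℝ => ((finalSet w θ y).card : ℝ))
      = fun θ => ∑ v, (act w y v).indicator (fun _ => (1:ℝ)) θ := by
    funext θ
    have : ∑ v, (act w y v).indicator (fun _ => (1:ℝ)) θ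
        = ∑ v : V, if v ∈ finalSet w θ y then (1:ℝ) else 0 := by
      refine Finset.sum_congr rfl fun v _ => ?_
      by_cases h : v ∈ finalSet w θ y
      · have h' : θ ∈ act w y v := h
        simp [h, Set.indicator_of_mem h']
      · have h' : θ ∉ act w y v := h
        simp [h, Set.indicator_of_notMem h']
    rw [this, Finset.sum_ite_mem, Finset.univ_inter, Finset.sum_const, nsmul_eq_mul, mul_one]
  have hact : ∀ v, MeasurableSet (act w y v) := fun v => measurable_memFinalSet w y v
  rw [h1]
  rw [integral_finset_sum _ (fun v _ => (integrable_const (1:ℝ)).indicator (hact v))]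
  refine Finset.sum_congr rfl fun v _ => ?_
  rw [integral_indicator_const (1:ℝ) (hact v), smul_eq_mul, mul_one]
  rfl

end LinInfAux

open LinInfAux

/-- On a DAG (witnessed by a rank function `r` increasing along edges), if there is
no directed path (with at least one edge) from an influenced vertex (`0 < x u`) to an
over-saturated vertex (`1 < x v + ∑_u w u v`), then the objective is linear:
`σ(x) = ∑_v x_v σ(1_v)`. -/
theorem stmt10 {V : Type*} [Fintype V] [DecidableEq V]
    (w : V → V → ℝ) (hw0 : ∀ u v, 0 ≤ w u v) (hw1 : ∀ v, (∑ u, w u v) ≤ 1)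
    (r : V → ℕ) (hdag : ∀ u v, w u v ≠ 0 → r u < r v)
    (x : V → ℝ) (hx : ∀ v, x v ∈ Set.Icc (0 : ℝ) 1)
    (hpath : ∀ u v, 0 < x u → 1 < x v + (∑ t, w t v) →
      ¬ Relation.TransGen (fun a b : V => w a b ≠ 0) u v) :
    sigmaLin w x = ∑ v, x v * sigmaLin w (fun u => if u = v then 1 else 0) := by
  have hx0 : ∀ s, 0 ≤ x s := fun s => (hx s).1
  have hx1 : ∀ s, x s ≤ 1 := fun s => (hx s).2
  set e : V → V → ℝ := fun t u => if u = t then 1 else 0 with he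
  have he0 : ∀ t s, 0 ≤ e t s := by intro t s; rw [he]; dsimp only; split <;> norm_num
  have he1 : ∀ t s, e t s ≤ 1 := by intro t s; rw [he]; dsimp only; split <;> norm_num
  -- recursion for x
  have recx : ∀ v, prbR w x v = x v + ∑ u, w u v * prbR w x u := by
    intro v
    apply prbR_rec w hw0 hw1 r hdag x hx0 hx1 v
    intro hgt u hwu
    apply prb_zero w hw0 hw1 r hdag x hx0 u
    intro s hs
    have htrans : Relation.TransGen (fun a b : V => w a b ≠ 0) s v := by
      rcases hs with rfl | hs
      · exact Relation.TransGen.single hwu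
      · exact Relation.TransGen.tail hs hwu
    by_contra hne
    exact hpath s v (lt_of_le_of_ne (hx0 s) (Ne.symm hne)) hgt htrans
  -- recursion for basis vectors
  have rece : ∀ t v, prbR w (e t) v = e t v + ∑ u, w u v * prbR w (e t) u := by
    intro t v
    apply prbR_rec w hw0 hw1 r hdag (e t) (he0 t) (he1 t) v
    intro hgt u hwu
    have hvt : v = t := by
      by_contra hvt
      have : e t v = 0 := by rw [he]; dsimp only; rw [if_neg hvt]
      rw [this, zero_add] at hgt
      exact absurd (hw1 v) (not_le.mpr hgt)
    subst hvt
    apply prb_zero w hw0 hw1 r hdag (e v) (he0 v) u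
    intro s hs
    have hrs : r s < r v := by
      rcases hs with rfl | hs
      · exact hdag s v hwu
      · exact lt_trans (rank_lt r hdag hs) (hdag u v hwu)
    have hsv : s ≠ v := fun h => by subst h; omega
    rw [he]; dsimp only; rw [if_neg hsv]
  -- uniqueness of the recursion
  have uniq : ∀ v, prbR w x v = ∑ t, x t * prbR w (e t) v := by
    have key : ∀ n (v : V), r v < n → prbR w x v = ∑ t, x t * prbR w (e t) v := by
      intro n
      induction n with
      | zero => intro v hv; omega
      | succ n ih =>
        intro v hv
        rw [recx v]
        have hre : ∑ t, x t * prbR w (e t) v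
            = x v + ∑ u, w u v * ∑ t, x t * prbR w (e t) u := by
          calc ∑ t, x t * prbR w (e t) v
              = ∑ t, x t * (e t v + ∑ u, w u v * prbR w (e t) u) := by
                exact Finset.sum_congr rfl fun t _ => by rw [rece t v]
            _ = (∑ t, x t * e t v) + ∑ t, x t * ∑ u, w u v * prbR w (e t) u := by
                rw [← Finset.sum_add_distrib]
                exact Finset.sum_congr rfl fun t _ => by ring
            _ = x v + ∑ u, w u v * ∑ t, x t * prbR w (e t) u := by
                congr 1
                · rw [he]
                  simp only [mul_ite, mul_one, mul_zero]
                  rw [Finset.sum_ite_eq Finset.univ v x, if_pos (Finset.mem_univ v)]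
                · calc ∑ t, x t * ∑ u, w u v * prbR w (e t) u
                      = ∑ t, ∑ u, w u v * (x t * prbR w (e t) u) := by
                        refine Finset.sum_congr rfl fun t _ => ?_
                        rw [Finset.mul_sum]
                        exact Finset.sum_congr rfl fun u _ => by ring
                    _ = ∑ u, ∑ t, w u v * (x t * prbR w (e t) u) := Finset.sum_comm
                    _ = ∑ u, w u v * ∑ t, x t * prbR w (e t) u := by
                        refine Finset.sum_congr rfl fun u _ => ?_
                        rw [← Finset.mul_sum]
        rw [hre]
        congr 1
        refine Finset.sum_congr rfl fun u _ => ?_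
        by_cases hwu : w u v = 0
        · rw [hwu, zero_mul, zero_mul]
        · rw [ih u (by have := hdag u v hwu; omega)]
    intro v
    exact key (r v + 1) v (by omega)
  -- conclude
  calc sigmaLin w x = ∑ v, prbR w x v := sigma_eq w x
    _ = ∑ v, ∑ t, x t * prbR w (e t) v := Finset.sum_congr rfl fun v _ => uniq v
    _ = ∑ t, ∑ v, x t * prbR w (e t) v := Finset.sum_comm
    _ = ∑ t, x t * ∑ v, prbR w (e t) v := by
        exact Finset.sum_congr rfl fun t _ => by rw [Finset.mul_sum]
    _ = ∑ v, x v * sigmaLin w (fun u => if u = v then 1 else 0) := by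
        refine Finset.sum_congr rfl fun t _ => ?_
        rw [← sigma_eq w (e t)]
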